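/- Let (X,w) be a weighted graph and R a nontrivial abelian group. If the 0-dimensional coboundary expansion with coefficients in the constant augmented sheaf R satisfies cb₀(X,w,R) ≥ ε, then the Cheeger constant satisfies h(X,w) ≥ ε. Consequently, for any two nontrivial abelian groups R, S: if cb₀(X,w,R) ≥ ε, then cb₀(X,w,S) ≥ ε/2. -/

import Mathlib

open SimpleGraph Finset
open scoped Classical

/-- If `cb₀(X,w,R) ≥ ε` for the constant augmented sheaf with coefficients in a
nontrivial abelian group `R` (stated: for every `f : X(0) → R` there is `a` with
`‖d₀f‖_w ≥ ε·w({v : f v ≠ a})`), then the Cheeger constant satisfies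
`h(X,w) ≥ ε`, and for any other nontrivial abelian group `S`,
`cb₀(X,w,S) ≥ ε/2`. -/
theorem stmt15 {V : Type*} [Fintype V] [DecidableEq V] (G : SimpleGraph V)
    [DecidableRel G.Adj]
    (wE : Sym2 V → ℝ) (wV : V → ℝ)
    (hEpos : ∀ e ∈ G.edgeSet, 0 < wE e) (hVpos : ∀ v : V, 0 < wV v)
    (hsum : ∑ e ∈ G.edgeFinset, wE e = 1)
    (hvert : ∀ v : V, 2 * wV v = ∑ u ∈ G.neighborFinset v, wE s(v, u))
    (R S : Type*) [AddCommGroup R] [Nontrivial R] [AddCommGroup S] [Nontrivial S]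
    (ε : ℝ) (hε : 0 ≤ ε)
    (hcb : ∀ f : V → R, ∃ a : R,
      ε * (∑ v ∈ Finset.univ.filter (fun v => f v ≠ a), wV v)
        ≤ (1 / 2) * ∑ u, ∑ v ∈ G.neighborFinset u,
            (if f u ≠ f v then wE s(u, v) else 0)) :
    (∀ A : Finset V, A.Nonempty → A ≠ Finset.univ →
      ε * min (∑ v ∈ A, wV v) (∑ v ∈ Aᶜ, wV v)
        ≤ ∑ u ∈ A, ∑ v ∈ (G.neighborFinset u) \ A, wE s(u, v)) ∧
    (∀ g : V → S, ∃ b : S,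
      (ε / 2) * (∑ v ∈ Finset.univ.filter (fun v => g v ≠ b), wV v)
        ≤ (1 / 2) * ∑ u, ∑ v ∈ G.neighborFinset u,
            (if g u ≠ g v then wE s(u, v) else 0)) := by
  have hWnn : ∀ A : Finset V, (0:ℝ) ≤ ∑ v ∈ A, wV v := fun A =>
    Finset.sum_nonneg (fun v _ => (hVpos v).le)
  have hWmono : ∀ A B : Finset V, A ⊆ B → ∑ v ∈ A, wV v ≤ ∑ v ∈ B, wV v := fun A B h =>
    Finset.sum_le_sum_of_subset_of_nonneg h (fun v _ _ => (hVpos v).le)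
  have hEnn : ∀ u v : V, G.Adj u v → 0 ≤ wE s(u, v) := fun u v h =>
    (hEpos _ ((G.mem_edgeSet).2 h)).le
  -- rewrite neighbor sums as full double sums
  have hrw : ∀ (p : V → V → Prop) (_ : ∀ u v, Decidable (p u v)),
      (∑ u, ∑ v ∈ G.neighborFinset u, (if p u v then wE s(u, v) else 0)) =
      ∑ u, ∑ v, (if G.Adj u v ∧ p u v then wE s(u, v) else 0) := by
    intro p _
    refine Finset.sum_congr rfl fun u _ => ?_
    rw [SimpleGraph.neighborFinset_eq_filter, Finset.sum_filter]
    refine Finset.sum_congr rfl fun v _ => ?_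
    by_cases h1 : G.Adj u v <;> by_cases h2 : p u v <;> simp [h1, h2]
  -- the cut of a set as a full double sum
  have hcut : ∀ A : Finset V,
      (∑ u, ∑ v, (if u ∈ A ∧ G.Adj u v ∧ v ∉ A then wE s(u, v) else 0)) =
      ∑ u ∈ A, ∑ v ∈ (G.neighborFinset u) \ A, wE s(u, v) := by
    intro A
    have step : ∀ u : V,
        (∑ v, (if u ∈ A ∧ G.Adj u v ∧ v ∉ A then wE s(u, v) else 0)) =
        (if u ∈ A then ∑ v ∈ (G.neighborFinset u) \ A, wE s(u, v) else 0) := by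
      intro u
      by_cases hu : u ∈ A
      · simp only [hu, if_true, true_and]
        rw [show (∑ v ∈ (G.neighborFinset u) \ A, wE s(u, v)) =
            ∑ v, (if v ∈ (G.neighborFinset u) \ A then wE s(u, v) else 0) by
          rw [Finset.sum_ite_mem, Finset.univ_inter]]
        refine Finset.sum_congr rfl fun v _ => ?_
        congr 1
        simp [Finset.mem_sdiff, SimpleGraph.mem_neighborFinset]
      · simp [hu]
    rw [Finset.sum_congr rfl (fun u _ => step u), Finset.sum_ite_mem, Finset.univ_inter]
  -- symmetry of cross-edge sums
  have hsymm : ∀ A : Finset V,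
      (∑ u, ∑ v, (if v ∈ A ∧ G.Adj u v ∧ u ∉ A then wE s(u, v) else 0)) =
      ∑ u, ∑ v, (if u ∈ A ∧ G.Adj u v ∧ v ∉ A then wE s(u, v) else 0) := by
    intro A
    rw [Finset.sum_comm]
    refine Finset.sum_congr rfl fun u _ => Finset.sum_congr rfl fun v _ => ?_
    rw [show s(v, u) = s(u, v) from Sym2.eq_swap]
    by_cases h : G.Adj u v
    · refine if_congr ?_ rfl rfl
      constructor
      · exact fun hh => ⟨hh.1, h, hh.2.2⟩
      · exact fun hh => ⟨hh.1, h.symm, hh.2.2⟩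
    · have h' : ¬ G.Adj v u := fun hh => h hh.symm
      simp [h, h']
  -- Part 1
  have part1 : ∀ A : Finset V, A.Nonempty → A ≠ Finset.univ →
      ε * min (∑ v ∈ A, wV v) (∑ v ∈ Aᶜ, wV v)
        ≤ ∑ u ∈ A, ∑ v ∈ (G.neighborFinset u) \ A, wE s(u, v) := by
    intro A hA1 hA2
    obtain ⟨r, hr⟩ := exists_ne (0 : R)
    obtain ⟨a, ha⟩ := hcb (fun v => if v ∈ A then r else 0)
    have hmin : min (∑ v ∈ A, wV v) (∑ v ∈ Aᶜ, wV v) ≤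
        ∑ v ∈ Finset.univ.filter
          (fun v => (if v ∈ A then r else 0) ≠ a), wV v := by
      rcases ne_or_eq a r with h | h
      · refine le_trans (min_le_left _ _) (hWmono _ _ ?_)
        intro v hv
        simp only [Finset.mem_filter, Finset.mem_univ, true_and, hv, if_true]
        exact h.symm
      · refine le_trans (min_le_right _ _) (hWmono _ _ ?_)
        intro v hv
        have hv' : v ∉ A := by simpa using hv
        simp only [Finset.mem_filter, Finset.mem_univ, true_and, hv', if_false, h]
        exact fun h0 => hr h0.symm
    have hval : ((1:ℝ)/2) * ∑ u, ∑ v ∈ G.neighborFinset u,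
        (if (if u ∈ A then r else 0) ≠ (if v ∈ A then r else 0)
          then wE s(u, v) else 0) =
        ∑ u ∈ A, ∑ v ∈ (G.neighborFinset u) \ A, wE s(u, v) := by
      rw [hrw (fun u v => (if u ∈ A then r else 0) ≠ (if v ∈ A then r else 0)) _]
      have split : ∀ u v : V,
          (if G.Adj u v ∧ (if u ∈ A then r else 0) ≠ (if v ∈ A then r else 0)
            then wE s(u, v) else 0) =
          (if u ∈ A ∧ G.Adj u v ∧ v ∉ A then wE s(u, v) else 0) +
          (if v ∈ A ∧ G.Adj u v ∧ u ∉ A then wE s(u, v) else 0) := by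
        intro u v
        by_cases h1 : u ∈ A <;> by_cases h2 : v ∈ A <;> by_cases h3 : G.Adj u v <;>
          simp [h1, h2, h3, hr, hr.symm, Ne.symm hr]
      rw [show (∑ u, ∑ v, (if G.Adj u v ∧ (if u ∈ A then r else 0) ≠
            (if v ∈ A then r else 0) then wE s(u, v) else 0)) =
          (∑ u, ∑ v, (if u ∈ A ∧ G.Adj u v ∧ v ∉ A then wE s(u, v) else 0)) +
          (∑ u, ∑ v, (if v ∈ A ∧ G.Adj u v ∧ u ∉ A then wE s(u, v) else 0)) by
        rw [← Finset.sum_add_distrib]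
        refine Finset.sum_congr rfl fun u _ => ?_
        rw [← Finset.sum_add_distrib]
        exact Finset.sum_congr rfl fun v _ => split u v]
      rw [hsymm A, hcut A]
      ring
    calc ε * min (∑ v ∈ A, wV v) (∑ v ∈ Aᶜ, wV v)
        ≤ ε * ∑ v ∈ Finset.univ.filter
            (fun v => (if v ∈ A then r else 0) ≠ a), wV v :=
          mul_le_mul_of_nonneg_left hmin hε
      _ ≤ ((1:ℝ)/2) * ∑ u, ∑ v ∈ G.neighborFinset u,
            (if (if u ∈ A then r else 0) ≠ (if v ∈ A then r else 0)
              then wE s(u, v) else 0) := ha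
      _ = ∑ u ∈ A, ∑ v ∈ (G.neighborFinset u) \ A, wE s(u, v) := hval
  refine ⟨part1, ?_⟩
  -- Part 2
  intro g
  rcases isEmpty_or_nonempty V with hV | hV
  · obtain ⟨b, -⟩ := exists_ne (0 : S)
    exact ⟨b, by simp⟩
  · obtain ⟨b, hbmem, hbmax⟩ := Finset.exists_max_image (Finset.univ.image g)
      (fun c => ∑ v ∈ Finset.univ.filter (fun v => g v = c), wV v)
      ((Finset.univ_nonempty).image g)
    refine ⟨b, ?_⟩
    set T := (Finset.univ.image g).erase b with hT
    -- (1) weight of {g ≠ b} as a sum over level sets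
    have hwt : (∑ v ∈ Finset.univ.filter (fun v => g v ≠ b), wV v) =
        ∑ c ∈ T, ∑ v ∈ Finset.univ.filter (fun v => g v = c), wV v := by
      have : ∀ c : S, (∑ v ∈ Finset.univ.filter (fun v => g v = c), wV v) =
          ∑ v, (if g v = c then wV v else 0) := by
        intro c; rw [Finset.sum_filter]
      rw [Finset.sum_congr rfl (fun c _ => this c), Finset.sum_comm]
      rw [Finset.sum_filter]
      refine Finset.sum_congr rfl fun v _ => ?_
      rw [Finset.sum_ite_eq T (g v) (fun _ => wV v)]
      have hmem : g v ∈ T ↔ g v ≠ b := by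
        constructor
        · exact fun h => (Finset.mem_erase.1 h).1
        · exact fun h => Finset.mem_erase.2 ⟨h, Finset.mem_image_of_mem g (Finset.mem_univ v)⟩
      exact if_congr hmem.symm rfl rfl
    -- (2) each level set satisfies the Cheeger bound
    have hlevel : ∀ c ∈ T,
        ε * (∑ v ∈ Finset.univ.filter (fun v => g v = c), wV v) ≤
        ∑ u, ∑ v, (if g u = c ∧ G.Adj u v ∧ g v ≠ c then wE s(u, v) else 0) := by
      intro c hc
      have hcb' : c ≠ b := (Finset.mem_erase.1 hc).1
      obtain ⟨vc, -, hvc⟩ := Finset.mem_image.1 (Finset.mem_erase.1 hc).2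
      obtain ⟨vb, -, hvb⟩ := Finset.mem_image.1 hbmem
      set A := Finset.univ.filter (fun v => g v = c) with hA
      have hA1 : A.Nonempty := ⟨vc, by simp [hA, hvc]⟩
      have hA2 : A ≠ Finset.univ := by
        intro h
        have : vb ∈ A := h ▸ Finset.mem_univ vb
        simp only [hA, Finset.mem_filter] at this
        exact hcb' (hvb ▸ this.2).symm
      have hsub : Finset.univ.filter (fun v => g v = b) ⊆ Aᶜ := by
        intro v hv
        simp only [Finset.mem_filter] at hv
        simp only [hA, Finset.mem_compl, Finset.mem_filter, Finset.mem_univ, true_and, hv.2]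
        exact fun hbc => hcb' hbc.symm
      have hmineq : min (∑ v ∈ A, wV v) (∑ v ∈ Aᶜ, wV v) = ∑ v ∈ A, wV v := by
        refine min_eq_left ?_
        calc (∑ v ∈ A, wV v)
            ≤ ∑ v ∈ Finset.univ.filter (fun v => g v = b), wV v :=
              hbmax c (Finset.mem_erase.1 hc).2
          _ ≤ ∑ v ∈ Aᶜ, wV v := hWmono _ _ hsub
      have := part1 A hA1 hA2
      rw [hmineq] at this
      calc ε * (∑ v ∈ A, wV v)
          ≤ ∑ u ∈ A, ∑ v ∈ (G.neighborFinset u) \ A, wE s(u, v) := this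
        _ = ∑ u, ∑ v, (if u ∈ A ∧ G.Adj u v ∧ v ∉ A then wE s(u, v) else 0) :=
            (hcut A).symm
        _ = ∑ u, ∑ v, (if g u = c ∧ G.Adj u v ∧ g v ≠ c then wE s(u, v) else 0) := by
            refine Finset.sum_congr rfl fun u _ => Finset.sum_congr rfl fun v _ => ?_
            refine if_congr ?_ rfl rfl
            simp [hA]
    -- (3) the level-set cuts sum up to at most the total cut
    have hsumcut : (∑ c ∈ T, ∑ u, ∑ v,
          (if g u = c ∧ G.Adj u v ∧ g v ≠ c then wE s(u, v) else 0)) ≤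
        ∑ u, ∑ v, (if G.Adj u v ∧ g u ≠ g v then wE s(u, v) else 0) := by
      rw [Finset.sum_comm]
      refine Finset.sum_le_sum fun u _ => ?_
      rw [Finset.sum_comm]
      refine Finset.sum_le_sum fun v _ => ?_
      have : ∀ c ∈ T, (if g u = c ∧ G.Adj u v ∧ g v ≠ c then wE s(u, v) else 0) =
          (if g u = c then (if G.Adj u v ∧ g v ≠ g u then wE s(u, v) else 0) else 0) := by
        intro c _
        by_cases h : g u = c
        · subst h; simp
        · simp [h]
      rw [Finset.sum_congr rfl this, Finset.sum_ite_eq T (g u)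
        (fun _ => if G.Adj u v ∧ g v ≠ g u then wE s(u, v) else 0)]
      by_cases h1 : g u ∈ T
      · by_cases h2 : G.Adj u v ∧ g v ≠ g u
        · simp [h1, h2, h2.1, h2.2.symm, le_refl]
        · have : (if G.Adj u v ∧ g v ≠ g u then wE s(u, v) else 0) = 0 := if_neg h2
          rw [if_pos h1, this]
          by_cases h3 : G.Adj u v ∧ g u ≠ g v
          · exact (if_pos h3) ▸ hEnn u v h3.1
          · exact le_of_eq (if_neg h3).symm
      · rw [if_neg h1]
        by_cases h3 : G.Adj u v ∧ g u ≠ g v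
        · exact (if_pos h3) ▸ hEnn u v h3.1
        · exact le_of_eq (if_neg h3).symm
    -- combine
    have htot : ε * (∑ v ∈ Finset.univ.filter (fun v => g v ≠ b), wV v) ≤
        ∑ u, ∑ v, (if G.Adj u v ∧ g u ≠ g v then wE s(u, v) else 0) := by
      rw [hwt, Finset.mul_sum]
      exact le_trans (Finset.sum_le_sum hlevel) hsumcut
    rw [hrw (fun u v => g u ≠ g v) _]
    linarith
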